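/- Let Ψ be a finite bounded distributive lattice and ε : Ψ → Ψ a map satisfying ε(⊤) = ⊤, ε(ψ) ≤ ψ, ε(ε(φ) ⊔ ψ) = ε(φ) ⊔ ε(ψ), and ε(φ ⊓ ψ) = ε(φ) ⊓ ε(ψ). If χ is a meet-irreducible element of Ψ and φ ∈ Ψ satisfies ε(φ) ≤ ε(χ), then there exists a meet-irreducible element λ of Ψ such that φ ≤ λ and ε(λ) = ε(χ). -/

import Mathlib

/-- A meet-irreducible element of a lattice with top: an element `χ ≠ ⊤`
such that `χ = μ ⊓ ν` implies `χ = μ` or `χ = ν`. -/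
def MeetIrred {Ψ : Type*} [Lattice Ψ] [OrderTop Ψ] (χ : Ψ) : Prop :=
  χ ≠ ⊤ ∧ ∀ μ ν : Ψ, χ = μ ⊓ ν → χ = μ ∨ χ = ν

theorem meetIrred_strongly_orderGenerating {Ψ : Type*} [DistribLattice Ψ]
    [BoundedOrder Ψ] [Fintype Ψ]
    (ε : Ψ → Ψ)
    (hE1 : ε ⊤ = ⊤)
    (hE2 : ∀ ψ : Ψ, ε ψ ≤ ψ)
    (hE3 : ∀ φ ψ : Ψ, ε (ε φ ⊔ ψ) = ε φ ⊔ ε ψ)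
    (hE4 : ∀ φ ψ : Ψ, ε (φ ⊓ ψ) = ε φ ⊓ ε ψ)
    (χ : Ψ) (hχ : MeetIrred χ) (φ : Ψ) (h : ε φ ≤ ε χ) :
    ∃ lam : Ψ, MeetIrred lam ∧ φ ≤ lam ∧ ε lam = ε χ := by
  classical
  set S : Set Ψ := {ψ | φ ≤ ψ ∧ ε ψ = ε χ} with hS
  have hne : (φ ⊔ ε χ) ∈ S := by
    constructor
    · exact le_sup_left
    · have : ε (ε χ ⊔ φ) = ε χ ⊔ ε φ := hE3 χ φ
      rw [sup_comm] at this
      rw [this, sup_eq_left.mpr h]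
  obtain ⟨lam, hlamS, hmax⟩ := Set.Finite.exists_maximalFor id S (Set.toFinite S)
    ⟨_, hne⟩
  obtain ⟨hφlam, hεlam⟩ := hlamS
  refine ⟨lam, ⟨?_, ?_⟩, hφlam, hεlam⟩
  · intro htop
    apply hχ.1
    rw [htop, hE1] at hεlam
    have := hE2 χ
    rw [← hεlam] at this
    exact top_le_iff.mp this
  · intro μ ν hmeet
    by_contra hcon
    push_neg at hcon
    obtain ⟨hμ, hν⟩ := hcon
    have hlamμ : lam ≤ μ := hmeet ▸ inf_le_left
    have hlamν : lam ≤ ν := hmeet ▸ inf_le_right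
    have hεμν : ε μ ⊓ ε ν = ε χ := by rw [← hE4, ← hmeet, hεlam]
    -- maximality: μ, ν not in S, so ε μ ≠ ε χ, ε ν ≠ ε χ
    have hεμ : ε μ ≠ ε χ := by
      intro he
      exact hμ (le_antisymm hlamμ (hmax ⟨le_trans hφlam hlamμ, he⟩ hlamμ))
    have hεν : ε ν ≠ ε χ := by
      intro he
      exact hν (le_antisymm hlamν (hmax ⟨le_trans hφlam hlamν, he⟩ hlamν))
    -- χ = (χ ⊔ ε μ) ⊓ (χ ⊔ ε ν)
    have hχeq : χ = (χ ⊔ ε μ) ⊓ (χ ⊔ ε ν) := by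
      rw [← sup_inf_left, hεμν, sup_eq_left.mpr (hE2 χ)]
    have hmono : ∀ a b : Ψ, a ≤ b → ε a ≤ ε b := by
      intro a b hab
      have : ε (a ⊓ b) = ε a ⊓ ε b := hE4 a b
      rw [inf_eq_left.mpr hab] at this
      rw [this]; exact inf_le_right
    have hidem : ∀ a : Ψ, ε (ε a) = ε a := by
      intro a
      refine le_antisymm (hE2 _) ?_
      have := hE3 a (ε a)
      rw [sup_idem] at this
      rw [this]; exact le_sup_left
    rcases hχ.2 _ _ hχeq with hc | hc
    · apply hεμ
      have hle : ε μ ≤ χ := by rw [hc]; exact le_sup_right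
      have h1 : ε μ ≤ ε χ := by
        have := hmono _ _ hle
        rwa [hidem] at this
      have h2 : ε χ ≤ ε μ := by rw [← hεμν]; exact inf_le_left
      exact le_antisymm h1 h2
    · apply hεν
      have hle : ε ν ≤ χ := by rw [hc]; exact le_sup_right
      have h1 : ε ν ≤ ε χ := by
        have := hmono _ _ hle
        rwa [hidem] at this
      have h2 : ε χ ≤ ε ν := by rw [← hεμν]; exact inf_le_right
      exact le_antisymm h1 h2
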